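/- arXiv:1612.01444 — 2 statements merged into one kernel-verified Lean document; each statement's English description precedes it below -/
import Mathlib

section
/- Let p > 2 be prime and let a(t), b(t) be monic polynomials over Z_p with f = deg b(t) < deg a(t) = e. Then there is an injective group homomorphism from B(I_f, C(b(t))) into B(I_e, C(a(t))). -/
open Matrix in
/-- The Brahana-Baer group `B(L 0, …, L (t-1))` determined by a family of `r × s`
matrices over `ZMod p`: underlying set `(ZMod p)^r × (ZMod p)^s × (ZMod p)^t` with
multiplication `(a,b,c)·(a',b',c') = (a+a', b+b', c+c'+(a L₁ b'ᵀ, …, a L_t b'ᵀ))`. -/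
def BGroup (p r s t : ℕ) (L : Fin t → Matrix (Fin r) (Fin s) (ZMod p)) : Type :=
  (Fin r → ZMod p) × (Fin s → ZMod p) × (Fin t → ZMod p)

namespace BGroup

open Matrix

variable {p r s t : ℕ} {L : Fin t → Matrix (Fin r) (Fin s) (ZMod p)}

instance : Mul (BGroup p r s t L) :=
  ⟨fun x y => (x.1 + y.1, x.2.1 + y.2.1,
    fun i => x.2.2 i + y.2.2 i + x.1 ⬝ᵥ (L i).mulVec y.2.1)⟩

instance : One (BGroup p r s t L) := ⟨(0, 0, 0)⟩

instance : Inv (BGroup p r s t L) :=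
  ⟨fun x => (-x.1, -x.2.1, fun i => -x.2.2 i + x.1 ⬝ᵥ (L i).mulVec x.2.1)⟩

lemma mul_def (x y : BGroup p r s t L) :
    x * y = (x.1 + y.1, x.2.1 + y.2.1,
      fun i => x.2.2 i + y.2.2 i + x.1 ⬝ᵥ (L i).mulVec y.2.1) := rfl

lemma one_def : (1 : BGroup p r s t L) = (0, 0, 0) := rfl

lemma inv_def (x : BGroup p r s t L) :
    x⁻¹ = (-x.1, -x.2.1, fun i => -x.2.2 i + x.1 ⬝ᵥ (L i).mulVec x.2.1) := rfl

instance : Group (BGroup p r s t L) where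
  mul := (· * ·)
  one := 1
  inv := (·⁻¹)
  mul_assoc x y z := by
    show (x * y) * z = x * (y * z)
    simp only [HMul.hMul, Mul.mul, mul_def]
    refine Prod.ext ?_ (Prod.ext ?_ ?_) <;> dsimp
    · abel
    · abel
    · funext i
      simp [Matrix.mulVec_add, dotProduct_add, add_dotProduct]
      ring
  one_mul x := by
    show 1 * x = x
    simp only [HMul.hMul, Mul.mul, mul_def, one_def]
    refine Prod.ext ?_ (Prod.ext ?_ ?_) <;> dsimp
    · abel
    · abel
    · funext i
      simp [zero_dotProduct]
  mul_one x := by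
    show x * 1 = x
    simp only [HMul.hMul, Mul.mul, mul_def, one_def]
    refine Prod.ext ?_ (Prod.ext ?_ ?_) <;> dsimp
    · abel
    · abel
    · funext i
      simp [Matrix.mulVec_zero]
  inv_mul_cancel x := by
    show x⁻¹ * x = 1
    simp only [HMul.hMul, Mul.mul, mul_def, one_def, inv_def]
    refine Prod.ext ?_ (Prod.ext ?_ ?_) <;> dsimp
    · abel
    · abel
    · funext i
      simp [neg_dotProduct]

instance [NeZero p] : Finite (BGroup p r s t L) :=
  inferInstanceAs (Finite (_ × _ × _))

end BGroup

/-- The companion-type matrix of a (monic) polynomial `a` of degree `e`: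
entries `1` in positions `(i, i+1)` for the first `e-1` rows, bottom row
`(a_0, …, a_{e-1})`, and `0` elsewhere. -/
def companionMx (p e : ℕ) (a : Polynomial (ZMod p)) : Matrix (Fin e) (Fin e) (ZMod p) :=
  Matrix.of fun i j =>
    if (i : ℕ) + 1 = e then a.coeff (j : ℕ)
    else if (i : ℕ) + 1 = (j : ℕ) then 1 else 0

section Aux

open Matrix

variable {p : ℕ}

/-- Zero-padding a vector of length `f` to a vector of length `e`. -/
def padZ (f e : ℕ) (x : Fin f → ZMod p) : Fin e → ZMod p :=
  fun k => if h : (k : ℕ) < f then x ⟨k, h⟩ else 0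

/-- The twisted padding determined by `b`: pad `y` with `∑ j, b_j y_j` in
coordinate `f` and zeros elsewhere. -/
def padB (f e : ℕ) (b : Polynomial (ZMod p)) (y : Fin f → ZMod p) : Fin e → ZMod p :=
  fun k => padZ f e y k + (if (k : ℕ) = f then ∑ j : Fin f, b.coeff (j : ℕ) * y j else 0)

lemma padZ_castLE {f e : ℕ} (hfe : f ≤ e) (x : Fin f → ZMod p) (i : Fin f) :
    padZ f e x (Fin.castLE hfe i) = x i := by
  simp [padZ]

lemma sum_padZ_mul {f e : ℕ} (hfe : f ≤ e) (x : Fin f → ZMod p) (G : Fin e → ZMod p) :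
    ∑ k, padZ f e x k * G k = ∑ i : Fin f, x i * G (Fin.castLE hfe i) := by
  classical
  have h1 : ∑ k : Fin e, padZ f e x k * G k
      = ∑ k ∈ (Finset.univ.map ⟨Fin.castLE hfe, Fin.castLE_injective hfe⟩),
          padZ f e x k * G k := by
    refine (Finset.sum_subset (Finset.subset_univ _) ?_).symm
    intro k _ hk
    have hkf : ¬ (k : ℕ) < f := by
      intro h
      exact hk (Finset.mem_map.mpr ⟨⟨(k : ℕ), h⟩, Finset.mem_univ _, Fin.ext rfl⟩)
    simp [padZ, hkf]
  rw [h1, Finset.sum_map]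
  refine Finset.sum_congr rfl fun i _ => ?_
  simp [padZ_castLE hfe]

lemma padZ_add {f e : ℕ} (x x' : Fin f → ZMod p) :
    padZ f e (x + x') = padZ f e x + padZ f e x' := by
  funext k
  by_cases h : (k : ℕ) < f <;> simp [padZ, h]

lemma padB_add {f e : ℕ} (b : Polynomial (ZMod p)) (y y' : Fin f → ZMod p) :
    padB f e b (y + y') = padB f e b y + padB f e b y' := by
  funext k
  by_cases h : (k : ℕ) = f <;>
    simp [padB, padZ_add, h, mul_add, Finset.sum_add_distrib] <;> ring

lemma indicator_dot {e : ℕ} (c : Fin e) (w : Fin e → ZMod p) :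
    ∑ m : Fin e, (if (c : ℕ) = (m : ℕ) then (1 : ZMod p) else 0) * w m = w c := by
  classical
  have : ∀ m : Fin e, ((c : ℕ) = (m : ℕ)) = (c = m) := by
    intro m; simp [Fin.ext_iff]
  simp only [this, ite_mul, one_mul, zero_mul]
  simp

lemma key_one {f e : ℕ} (hfe : f < e) (b : Polynomial (ZMod p))
    (x y : Fin f → ZMod p) :
    padZ f e x ⬝ᵥ (1 : Matrix (Fin e) (Fin e) (ZMod p)).mulVec (padB f e b y)
      = x ⬝ᵥ (1 : Matrix (Fin f) (Fin f) (ZMod p)).mulVec y := by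
  rw [Matrix.one_mulVec, Matrix.one_mulVec]
  show ∑ k, padZ f e x k * padB f e b y k = _
  rw [sum_padZ_mul hfe.le]
  refine Finset.sum_congr rfl fun i _ => ?_
  have hif : ¬ ((i : Fin f) : ℕ) = f := Nat.ne_of_lt i.isLt
  simp [padB, padZ_castLE hfe.le, hif, dotProduct]

lemma key_comp {f e : ℕ} (hfe : f < e) (a b : Polynomial (ZMod p))
    (x y : Fin f → ZMod p) :
    padZ f e x ⬝ᵥ (companionMx p e a).mulVec (padB f e b y)
      = x ⬝ᵥ (companionMx p f b).mulVec y := by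
  classical
  show ∑ k, padZ f e x k * (companionMx p e a).mulVec (padB f e b y) k = _
  rw [sum_padZ_mul hfe.le]
  refine Finset.sum_congr rfl fun i _ => ?_
  congr 1
  -- compute the `castLE i` entry of the mulVec on the left
  have hi1e : (i : ℕ) + 1 < e := Nat.lt_of_le_of_lt i.isLt hfe
  have hi1e' : (i : ℕ) + 1 ≠ e := Nat.ne_of_lt hi1e
  set c : Fin e := ⟨(i : ℕ) + 1, hi1e⟩ with hc
  have hrow : ∀ m : Fin e, companionMx p e a (Fin.castLE hfe.le i) m
      = if (c : ℕ) = (m : ℕ) then 1 else 0 := by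
    intro m
    simp [companionMx, hi1e', hc]
  have hL : (companionMx p e a).mulVec (padB f e b y) (Fin.castLE hfe.le i)
      = padB f e b y c := by
    show ∑ m, companionMx p e a (Fin.castLE hfe.le i) m * padB f e b y m = _
    simp only [hrow]
    exact indicator_dot c _
  rw [hL]
  -- now evaluate both sides, splitting on whether `i+1 = f`
  by_cases hif : (i : ℕ) + 1 = f
  · have h1 : ¬ ((c : ℕ) < f) := by simp [hc, hif]
    have hR : (companionMx p f b).mulVec y i = ∑ j : Fin f, b.coeff (j : ℕ) * y j := by
      show ∑ m, companionMx p f b i m * y m = _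
      refine Finset.sum_congr rfl fun m _ => ?_
      simp [companionMx, hif]
    rw [hR]
    simp [padB, padZ, hc, h1, hif]
  · have hi1f : (i : ℕ) + 1 < f := Nat.lt_of_le_of_ne i.isLt hif
    have hR : (companionMx p f b).mulVec y i = y ⟨(i : ℕ) + 1, hi1f⟩ := by
      show ∑ m, companionMx p f b i m * y m = _
      have hrow' : ∀ m : Fin f, companionMx p f b i m
          = if ((⟨(i : ℕ) + 1, hi1f⟩ : Fin f) : ℕ) = (m : ℕ) then 1 else 0 := by
        intro m
        simp [companionMx, hif]
      refine Eq.trans ?_ (indicator_dot (⟨(i : ℕ) + 1, hi1f⟩ : Fin f) y)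
      exact Finset.sum_congr rfl fun m _ => by rw [hrow' m]
    rw [hR]
    simp [padB, padZ, hc, hi1f, hif]

end Aux

/-- For `p > 2` prime and monic polynomials `a(t), b(t)` over `Z_p`
with `deg b < deg a`, there is an injective group homomorphism from
`B(I_f, C(b(t)))` into `B(I_e, C(a(t)))`, where `f = deg b` and `e = deg a`. -/
theorem bgroup_embedding_of_degree_lt
    (p : ℕ) [Fact p.Prime] (hp2 : 2 < p) (a b : Polynomial (ZMod p))
    (ha : a.Monic) (hb : b.Monic) (hdeg : b.natDegree < a.natDegree) :
    ∃ φ : BGroup p b.natDegree b.natDegree 2 ![1, companionMx p b.natDegree b] →*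
          BGroup p a.natDegree a.natDegree 2 ![1, companionMx p a.natDegree a],
      Function.Injective φ := by
  classical
  have hfe : b.natDegree < a.natDegree := hdeg
  set f := b.natDegree
  set e := a.natDegree
  refine ⟨MonoidHom.mk' (fun g => (padZ f e g.1, padB f e b g.2.1, g.2.2)) ?_, ?_⟩
  · intro g h
    simp only [BGroup.mul_def]
    refine Prod.ext ?_ (Prod.ext ?_ ?_) <;> dsimp
    · exact padZ_add _ _
    · exact padB_add _ _ _
    · funext i
      congr 1
      fin_cases i
      · simpa using (key_one hfe b g.1 h.2.1).symm
      · simpa using (key_comp hfe a b g.1 h.2.1).symm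
  · intro g h hgh
    have h1 : padZ f e g.1 = padZ f e h.1 := congrArg Prod.fst hgh
    have h2 : padB f e b g.2.1 = padB f e b h.2.1 :=
      congrArg (fun z => z.2.1) hgh
    have h3 : g.2.2 = h.2.2 := congrArg (fun z => z.2.2) hgh
    have hg1 : g.1 = h.1 := by
      funext i
      have := congrFun h1 (Fin.castLE hfe.le i)
      simpa [padZ_castLE hfe.le] using this
    have hg2 : g.2.1 = h.2.1 := by
      funext i
      have := congrFun h2 (Fin.castLE hfe.le i)
      have hif : ¬ ((i : Fin f) : ℕ) = f := Nat.ne_of_lt i.isLt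
      simpa [padB, padZ_castLE hfe.le, hif] using this
    exact Prod.ext hg1 (Prod.ext hg2 h3)
end

section
/- Let p and e be primes with p > 2 and e > 2, let q = p^e, and let H = H(F_q) be the Heisenberg group with commutator subgroup H'. Let N ≤ H' be a subgroup with |H' : N| = p^g for some g ≥ 2. Since H' is central and both H/H' and H'/N are elementary abelian p-groups (hence Z_p-vector spaces), the commutator map of H/N induces a Z_p-bilinear map c : (H/H') × (H/H') → H'/N. Then the adjoint ring Adj(c) is isomorphic as a ring to the matrix ring M_2(F_q). -/
/-- The Heisenberg group over a field `K`: underlying set `K × K × K` with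
multiplication `(α,β,γ)·(α',β',γ') = (α+α', β+β', γ+γ'+α·β')`. -/
def Heisenberg (K : Type) [Field K] : Type := K × K × K

namespace Heisenberg

variable {K : Type} [Field K]

instance : Mul (Heisenberg K) :=
  ⟨fun a b => (a.1 + b.1, a.2.1 + b.2.1, a.2.2 + b.2.2 + a.1 * b.2.1)⟩

instance : One (Heisenberg K) := ⟨((0 : K), (0 : K), (0 : K))⟩

instance : Inv (Heisenberg K) :=
  ⟨fun a => (-a.1, -a.2.1, -a.2.2 + a.1 * a.2.1)⟩

lemma mul_def (a b : Heisenberg K) :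
    a * b = (a.1 + b.1, a.2.1 + b.2.1, a.2.2 + b.2.2 + a.1 * b.2.1) := rfl

lemma one_def : (1 : Heisenberg K) = ((0 : K), (0 : K), (0 : K)) := rfl

lemma inv_def (a : Heisenberg K) : a⁻¹ = (-a.1, -a.2.1, -a.2.2 + a.1 * a.2.1) := rfl

instance : Group (Heisenberg K) where
  mul := (· * ·)
  one := 1
  inv := (·⁻¹)
  mul_assoc a b c := by
    show (a * b) * c = a * (b * c)
    simp only [↓mul_def]
    refine Prod.ext ?_ (Prod.ext ?_ ?_) <;> (try dsimp) <;> ring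
  one_mul a := by
    show 1 * a = a
    simp only [↓mul_def, one_def]
    refine Prod.ext ?_ (Prod.ext ?_ ?_) <;> (try dsimp) <;> ring
  mul_one a := by
    show a * 1 = a
    simp only [↓mul_def, one_def]
    refine Prod.ext ?_ (Prod.ext ?_ ?_) <;> (try dsimp) <;> ring
  inv_mul_cancel a := by
    show a⁻¹ * a = 1
    simp only [↓mul_def, one_def, inv_def]
    refine Prod.ext ?_ (Prod.ext ?_ ?_) <;> (try dsimp) <;> ring

instance [Finite K] : Finite (Heisenberg K) := inferInstanceAs (Finite (K × K × K))

end Heisenberg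

namespace Heisenberg

variable {K : Type} [Field K]

/-- The subgroup `{(0,0,γ)}` of the Heisenberg group. -/
def zSubgroup (K : Type) [Field K] : Subgroup (Heisenberg K) where
  carrier := {x : Heisenberg K | x.1 = 0 ∧ x.2.1 = 0}
  one_mem' := ⟨rfl, rfl⟩
  mul_mem' := by
    rintro x y ⟨hx1, hx2⟩ ⟨hy1, hy2⟩
    refine ⟨?_, ?_⟩ <;> simp [mul_def, hx1, hx2, hy1, hy2]
  inv_mem' := by
    rintro x ⟨h1, h2⟩
    refine ⟨?_, ?_⟩ <;> simp [inv_def, h1, h2]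

lemma commutator_le_zSubgroup : commutator (Heisenberg K) ≤ zSubgroup K := by
  rw [commutator, Subgroup.commutator_le]
  intro g _ h _
  refine ⟨?_, ?_⟩ <;> simp [commutatorElement_def, ↓mul_def, inv_def]

instance : CommGroup ↥(commutator (Heisenberg K)) :=
  { (inferInstance : Group ↥(commutator (Heisenberg K))) with
    mul_comm := by
      rintro ⟨x, hx⟩ ⟨y, hy⟩
      obtain ⟨hx1, hx2⟩ := commutator_le_zSubgroup hx
      obtain ⟨hy1, hy2⟩ := commutator_le_zSubgroup hy
      apply Subtype.ext
      show x * y = y * x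
      simp only [↓mul_def]
      refine Prod.ext ?_ (Prod.ext ?_ ?_) <;>
        · dsimp
          simp [hx1, hx2, hy1, hy2]
          try ring }

open scoped commutatorElement in
lemma comm_mem_commutator (x y : Heisenberg K) :
    x⁻¹ * y⁻¹ * x * y ∈ commutator (Heisenberg K) := by
  have h : x⁻¹ * y⁻¹ * x * y = ⁅x⁻¹, y⁻¹⁆ := by
    simp [commutatorElement_def, mul_assoc]
  rw [h, commutator]
  exact Subgroup.commutator_mem_commutator (Subgroup.mem_top _) (Subgroup.mem_top _)

end Heisenberg

/-- The adjoint ring of a biadditive map `c : U × U → W`: the subring of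
`End(U) × End(U)ᵐᵒᵖ` consisting of pairs `(F, F*)` with `c (F u) v = c u (F* v)`
for all `u, v`; multiplication is `(F,F*)·(G,G*) = (F∘G, G*∘F*)`. -/
def AdjRing {U W : Type} [AddCommGroup U] [AddCommGroup W] (c : U →+ U →+ W) :
    Subring (AddMonoid.End U × (AddMonoid.End U)ᵐᵒᵖ) where
  carrier := {F | ∀ u v : U, c (F.1 u) v = c u (F.2.unop v)}
  zero_mem' := by intro u v; simp
  one_mem' := by intro u v; rfl
  add_mem' := by
    rintro ⟨a1, a2⟩ ⟨b1, b2⟩ ha hb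
    have ha' : ∀ u v : U, c (a1 u) v = c u (a2.unop v) := ha
    have hb' : ∀ u v : U, c (b1 u) v = c u (b2.unop v) := hb
    intro u v
    show c (a1 u + b1 u) v = c u (a2.unop v + b2.unop v)
    calc c (a1 u + b1 u) v = c (a1 u) v + c (b1 u) v := by rw [map_add]; rfl
      _ = c u (a2.unop v) + c u (b2.unop v) := by rw [ha' u v, hb' u v]
      _ = c u (a2.unop v + b2.unop v) := (map_add (c u) _ _).symm
  neg_mem' := by
    rintro ⟨a1, a2⟩ ha
    have ha' : ∀ u v : U, c (a1 u) v = c u (a2.unop v) := ha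
    intro u v
    show c (-(a1 u)) v = c u (-(a2.unop v))
    calc c (-(a1 u)) v = -(c (a1 u) v) := by rw [map_neg]; rfl
      _ = -(c u (a2.unop v)) := by rw [ha' u v]
      _ = c u (-(a2.unop v)) := (map_neg (c u) _).symm
  mul_mem' := by
    rintro ⟨a1, a2⟩ ⟨b1, b2⟩ ha hb
    have ha' : ∀ u v : U, c (a1 u) v = c u (a2.unop v) := ha
    have hb' : ∀ u v : U, c (b1 u) v = c u (b2.unop v) := hb
    intro u v
    show c (a1 (b1 u)) v = c u (b2.unop (a2.unop v))
    rw [ha' (b1 u) v, hb' u (a2.unop v)]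


open Module

lemma charp_of_card {p e : ℕ} (hp : p.Prime) (K : Type) [Field K] [Fintype K]
    (hK : Fintype.card K = p ^ e) (he : e ≠ 0) : CharP K p := by
  obtain ⟨r, hr⟩ := CharP.exists K
  obtain ⟨n, hrp, hcard⟩ := @FiniteField.card K _ _ r hr
  have : p = r := by
    have hdvd : p ∣ r ^ (n : ℕ) := by
      rw [← hcard, hK]
      exact dvd_pow_self p he
    exact ((Nat.Prime.dvd_of_dvd_pow hp hdvd) |> fun h => (Nat.prime_dvd_prime_iff_eq hp hrp).mp h)
  rwa [this]

set_option maxHeartbeats 2000000 in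
lemma keylemma (p e : ℕ) (hp : p.Prime) (he : e.Prime)
    (K : Type) [Field K] [Fintype K] (hK : Fintype.card K = p ^ e)
    (N₀ : AddSubgroup K) (g : ℕ) (hg : 2 ≤ g)
    (hcard : Nat.card N₀ * p ^ g = p ^ e)
    (φ ψ : K →+ K) (h : ∀ a b : K, φ a * b - a * ψ b ∈ N₀) :
    ∃ μ : K, (∀ a, φ a = μ * a) ∧ (∀ b, ψ b = μ * b) := by
  haveI hfp : Fact p.Prime := ⟨hp⟩
  have hp1 : 1 < p := hp.one_lt
  haveI : CharP K p := charp_of_card hp K hK he.ne_zero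
  letI : Algebra (ZMod p) K := ZMod.algebra K p
  -- finrank
  have hcardK : Fintype.card K = p ^ (finrank (ZMod p) K) := by
    have := Module.card_fintype (finBasis (ZMod p) K)
    simpa [ZMod.card] using this
  have hfr : finrank (ZMod p) K = e := by
    have := hcardK.symm.trans hK
    exact (Nat.pow_right_injective hp.two_le this)
  -- the functional f₀
  obtain ⟨i₀⟩ : Nonempty (Fin (finrank (ZMod p) K)) := by
    rw [hfr]; exact ⟨⟨0, he.pos⟩⟩
  set b : Basis (Fin (finrank (ZMod p) K)) (ZMod p) K := finBasis (ZMod p) K with hb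
  set f₀ : K →ₗ[ZMod p] ZMod p := b.coord i₀ with hf₀
  have hf₀ne : f₀ (b i₀) = 1 := by simp [hf₀]
  -- nondegeneracy
  have nd : ∀ x : K, (∀ y : K, f₀ (x * y) = 0) → x = 0 := by
    intro x hx
    by_contra hx0
    have := hx (x⁻¹ * b i₀)
    rw [← mul_assoc, mul_inv_cancel₀ hx0, one_mul, hf₀ne] at this
    exact one_ne_zero this
  -- the pairing equivalence
  let Λ : K →ₗ[ZMod p] Module.Dual (ZMod p) K :=
    { toFun := fun x => f₀ ∘ₗ LinearMap.mulLeft (ZMod p) x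
      map_add' := fun x x' => by
        ext y; simp [LinearMap.mulLeft_apply, add_mul]
      map_smul' := fun z x => by
        ext y; simp [LinearMap.mulLeft_apply, smul_mul_assoc] }
  have hΛapp : ∀ (x y : K), Λ x y = f₀ (x * y) := fun x y => rfl
  have hΛinj : Function.Injective Λ := by
    rw [← LinearMap.ker_eq_bot, LinearMap.ker_eq_bot']
    intro x hx
    exact nd x (fun y => by rw [← hΛapp x y, hx]; rfl)
  have hfreq : finrank (ZMod p) K = finrank (ZMod p) (Module.Dual (ZMod p) K) :=
    Subspace.dual_finrank_eq.symm
  let Λe : K ≃ₗ[ZMod p] Module.Dual (ZMod p) K :=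
    LinearMap.linearEquivOfInjective Λ hΛinj hfreq
  have hΛeapp : ∀ x : K, Λe x = Λ x := fun x => rfl
  -- the adjoint of ψ with respect to the pairing
  set ψl : K →ₗ[ZMod p] K := ψ.toZModLinearMap p with hψl
  let dg : K → K := fun y => Λe.symm (f₀ ∘ₗ (LinearMap.mulRight (ZMod p) y) ∘ₗ ψl)
  have hdag : ∀ y bb : K, f₀ (ψ bb * y) = f₀ (bb * dg y) := by
    intro y bb
    have h1 : Λ (Λe.symm (f₀ ∘ₗ (LinearMap.mulRight (ZMod p) y) ∘ₗ ψl))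
        = f₀ ∘ₗ (LinearMap.mulRight (ZMod p) y) ∘ₗ ψl := by
      rw [← hΛeapp]; exact Λe.apply_symm_apply _
    have h2 := LinearMap.congr_fun h1 bb
    rw [hΛapp] at h2
    simp only [LinearMap.coe_comp, Function.comp_apply, LinearMap.mulRight_apply] at h2
    have hψlb : ψl bb = ψ bb := rfl
    rw [hψlb] at h2
    rw [← h2, mul_comm]
  have ddiff : ∀ w w' : K, (∀ bb : K, f₀ (bb * w) = f₀ (bb * w')) → w = w' := by
    intro w w' hw
    have hz : ∀ y : K, f₀ ((w - w') * y) = 0 := by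
      intro y
      have h3 := hw y
      rw [sub_mul, map_sub, mul_comm w y, mul_comm w' y, h3, sub_self]
    exact sub_eq_zero.mp (nd _ hz)
  -- dg is additive
  have dgadd : ∀ y y' : K, dg (y + y') = dg y + dg y' := by
    intro y y'
    refine ddiff _ _ (fun bb => ?_)
    rw [← hdag (y + y') bb, mul_add, map_add, hdag y bb, hdag y' bb, ← map_add, ← mul_add]
  let dgh : K →+ K := AddMonoidHom.mk' dg dgadd
  have hdghapp : ∀ y, dgh y = dg y := fun _ => rfl
  -- the submodule N₀'
  letI N₀' : Submodule (ZMod p) K := AddSubgroup.toZModSubmodule p N₀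
  letI : Fintype ↥N₀' := Fintype.ofFinite _
  have hcardN' : Fintype.card ↥N₀' = p ^ (finrank (ZMod p) ↥N₀') := by
    have := Module.card_fintype (finBasis (ZMod p) ↥N₀')
    simpa [ZMod.card] using this
  have hNN : Nat.card ↥N₀ = Fintype.card ↥N₀' := by
    rw [← Nat.card_eq_fintype_card]
    exact Nat.card_congr (Equiv.subtypeEquivRight
      (fun x => (AddSubgroup.mem_toZModSubmodule p).symm))
  have hNfr : finrank (ZMod p) ↥N₀' + g = e := by
    have hpe : p ^ (finrank (ZMod p) ↥N₀' + g) = p ^ e := by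
      rw [pow_add, ← hcardN', ← hNN, hcard]
    exact Nat.pow_right_injective hp.two_le hpe
  -- the annihilator of N₀
  let Θ : K →ₗ[ZMod p] (↥N₀' →ₗ[ZMod p] ZMod p) :=
    { toFun := fun t => f₀ ∘ₗ (LinearMap.mulLeft (ZMod p) t) ∘ₗ N₀'.subtype
      map_add' := fun t t' => by
        ext n; simp [LinearMap.mulLeft_apply, add_mul]
      map_smul' := fun z t => by
        ext n; simp [LinearMap.mulLeft_apply, smul_mul_assoc] }
  have hrn := LinearMap.finrank_range_add_finrank_ker Θ
  have hrange : finrank (ZMod p) (LinearMap.range Θ) ≤ finrank (ZMod p) ↥N₀' := by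
    calc finrank (ZMod p) (LinearMap.range Θ)
        ≤ finrank (ZMod p) (↥N₀' →ₗ[ZMod p] ZMod p) := Submodule.finrank_le _
      _ = finrank (ZMod p) ↥N₀' := Module.finrank_linearMap_self _ _ _
  have hkerge : 2 ≤ finrank (ZMod p) (LinearMap.ker Θ) := by
    rw [hfr] at hrn
    omega
  have hker_ne : LinearMap.ker Θ ≠ ⊥ := by
    intro hbot
    rw [hbot, finrank_bot] at hkerge
    omega
  obtain ⟨t₂, ht₂mem, ht₂ne⟩ := Submodule.exists_mem_ne_zero_of_ne_bot hker_ne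
  have hnotle : ¬ (LinearMap.ker Θ ≤ Submodule.span (ZMod p) {t₂}) := by
    intro hle
    have h1 := Submodule.finrank_mono hle
    rw [finrank_span_singleton ht₂ne] at h1
    omega
  obtain ⟨t₁, ht₁mem, ht₁ns⟩ := SetLike.not_le_iff_exists.mp hnotle
  -- the key identity
  have tker_prop : ∀ t, t ∈ LinearMap.ker Θ → ∀ n ∈ N₀, f₀ (t * n) = 0 := by
    intro t ht n hn
    have := LinearMap.congr_fun (LinearMap.mem_ker.mp ht)
      (⟨n, (AddSubgroup.mem_toZModSubmodule p).mpr hn⟩ : ↥N₀')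
    simpa [Θ, LinearMap.mulLeft_apply] using this
  have keyid : ∀ t, t ∈ LinearMap.ker Θ → ∀ a : K, t * φ a = dg (t * a) := by
    intro t ht a
    refine ddiff _ _ (fun bb => ?_)
    have h0 := tker_prop t ht _ (h a bb)
    rw [mul_sub, map_sub, sub_eq_zero] at h0
    have e1 : bb * (t * φ a) = t * (φ a * bb) := by ring
    have e2 : t * (a * ψ bb) = ψ bb * (t * a) := by ring
    rw [e1, h0, e2, hdag (t * a) bb]
  -- s := t₁ * t₂⁻¹ commutes with dg
  have hs_mem : ∀ x : K, dg ((t₁ * t₂⁻¹) * x) = (t₁ * t₂⁻¹) * dg x := by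
    intro x
    have e1 := keyid t₁ ht₁mem (t₂⁻¹ * x)
    have e2 := keyid t₂ ht₂mem (t₂⁻¹ * x)
    rw [mul_inv_cancel_left₀ ht₂ne] at e2
    have e3 : t₁ * t₂⁻¹ * x = t₁ * (t₂⁻¹ * x) := by ring
    rw [e3, ← e1, ← e2]
    field_simp
  clear_value dg
  clear hΛapp hΛinj hΛeapp Λe Λ hψl ψl hf₀ hf₀ne hb
  -- the commuting subfield is everything
  let CS : Submodule (ZMod p) K :=
    { carrier := {s : K | ∀ x : K, dg (s * x) = s * dg x}
      add_mem' := by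
        intro s s' hs hs' x
        rw [add_mul, dgadd, hs x, hs' x, add_mul]
      zero_mem' := by
        intro x
        rw [zero_mul, zero_mul, ← hdghapp, map_zero]
      smul_mem' := by
        intro z s hs x
        rw [smul_mul_assoc, ← hdghapp, ZMod.map_smul dgh z, hdghapp, hs x, smul_mul_assoc] }
  have hCS1 : (1 : K) ∈ CS := by
    intro x; rw [one_mul, one_mul]
  have hCSs : (t₁ * t₂⁻¹) ∈ CS := hs_mem
  have hs_notspan1 : (t₁ * t₂⁻¹) ∉ Submodule.span (ZMod p) {(1 : K)} := by
    intro hmem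
    obtain ⟨z, hz⟩ := Submodule.mem_span_singleton.mp hmem
    apply ht₁ns
    apply Submodule.mem_span_singleton.mpr
    refine ⟨z, ?_⟩
    have : t₁ = (t₁ * t₂⁻¹) * t₂ := by field_simp
    rw [this, ← hz, smul_mul_assoc, one_mul]
  have hlt : Submodule.span (ZMod p) {(1 : K)} < CS := by
    rw [SetLike.lt_iff_le_and_exists]
    constructor
    · rw [Submodule.span_le, Set.singleton_subset_iff]
      exact hCS1
    · exact ⟨t₁ * t₂⁻¹, hCSs, hs_notspan1⟩
  have h2CS : 2 ≤ finrank (ZMod p) CS := by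
    have := Submodule.finrank_lt_finrank_of_lt hlt
    rwa [finrank_span_singleton (one_ne_zero)] at this
  letI : Fintype ↥CS := Fintype.ofFinite _
  have hcardCS : Fintype.card ↥CS = p ^ (finrank (ZMod p) CS) := by
    have := Module.card_fintype (finBasis (ZMod p) ↥CS)
    simpa [ZMod.card] using this
  -- the subfield C
  let C : Subfield K :=
    { carrier := {s : K | ∀ x : K, dg (s * x) = s * dg x}
      one_mem' := hCS1
      mul_mem' := by
        intro s s' hs hs' x
        rw [mul_assoc, hs (s' * x), hs' x, mul_assoc]
      zero_mem' := CS.zero_mem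
      add_mem' := fun hs hs' => CS.add_mem hs hs'
      neg_mem' := by
        intro s hs x
        have h1 : (-s) * x = -(s * x) := by ring
        have h2 : dg (-(s * x)) = -(dg (s * x)) := by
          rw [← hdghapp, ← hdghapp, map_neg]
        rw [h1, h2, hs x, neg_mul]
      inv_mem' := by
        intro s hs
        rcases eq_or_ne s 0 with rfl | hs0
        · rw [inv_zero]; exact CS.zero_mem
        · intro x
          have := hs (s⁻¹ * x)
          rw [mul_inv_cancel_left₀ hs0] at this
          rw [this]
          field_simp }
  letI : Fintype ↥C := Fintype.ofFinite _
  have hcardC : Fintype.card ↥C = Fintype.card ↥CS :=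
    Fintype.card_congr (Equiv.subtypeEquivRight (fun x => Iff.rfl))
  letI : Fintype ↥C.toSubring := Fintype.ofFinite _
  -- K is a vector space over C
  have hcardKC : Fintype.card K = Fintype.card ↥C ^ (finrank ↥C K) := by
    have := Module.card_fintype (finBasis ↥C K)
    simpa using this
  have hem : e = (finrank (ZMod p) CS) * (finrank ↥C K) := by
    have hpe : p ^ e = p ^ ((finrank (ZMod p) CS) * (finrank ↥C K)) := by
      rw [← hK, hcardKC, hcardC, hcardCS, ← pow_mul]
    exact Nat.pow_right_injective hp.two_le hpe
  have hdC : finrank (ZMod p) CS = e := by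
    rcases (Nat.Prime.eq_one_or_self_of_dvd he _ ⟨_, hem⟩) with h1 | h1
    · omega
    · exact h1
  have hcardCK : Fintype.card ↥C = Fintype.card K := by
    rw [hcardC, hcardCS, hdC, hK]
  -- conclude C = ⊤
  have hCtop : ∀ x : K, ∀ y : K, dg (x * y) = x * dg y := by
    intro x
    by_contra hx
    have hxr : x ∉ Set.range (fun (c : ↥C) => (c : K)) := by
      rintro ⟨⟨y, hy⟩, rfl⟩
      exact hx hy
    have := Fintype.card_lt_of_injective_of_notMem
      (fun (c : ↥C) => (c : K)) Subtype.val_injective hxr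
    omega
  -- conclusion
  set μ := dg 1 with hμ
  have hdg_eq : ∀ y, dg y = y * μ := by
    intro y
    have := hCtop y 1
    rw [mul_one] at this
    rw [this]
  have hψ : ∀ bb, ψ bb = μ * bb := by
    intro bb
    have hz : ∀ y, f₀ ((ψ bb - μ * bb) * y) = 0 := by
      intro y
      rw [sub_mul, map_sub, hdag y bb, hdg_eq y]
      have e4 : bb * (y * μ) = μ * bb * y := by ring
      rw [e4, sub_self]
    exact sub_eq_zero.mp (nd _ hz)
  have hφ : ∀ a, φ a = μ * a := by
    intro a
    have e2 := keyid t₂ ht₂mem a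
    rw [hdg_eq] at e2
    exact mul_left_cancel₀ ht₂ne (e2.trans (by ring))
  exact ⟨μ, hφ, hψ⟩

/-! ### Auxiliary lemmas on the Heisenberg group -/

namespace Heisenberg

variable {K : Type} [Field K]

/-- The central element `(0,0,γ)`. -/
def zmk (γ : K) : Heisenberg K := ((0 : K), (0 : K), γ)

lemma zmk_mul (γ γ' : K) : zmk γ * zmk γ' = zmk (γ + γ') := by
  rw [mul_def]
  refine Prod.ext ?_ (Prod.ext ?_ ?_) <;> simp [zmk]

lemma zmk_inv (γ : K) : (zmk γ)⁻¹ = zmk (-γ) := by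
  rw [inv_def]
  refine Prod.ext ?_ (Prod.ext ?_ ?_) <;> simp [zmk]

lemma comm_formula (x y : Heisenberg K) :
    x⁻¹ * y⁻¹ * x * y = zmk (x.1 * y.2.1 - y.1 * x.2.1) := by
  simp only [↓mul_def, inv_def]
  refine Prod.ext ?_ (Prod.ext ?_ ?_) <;> simp [zmk] <;> ring

lemma z_mem_commutator (γ : K) : zmk γ ∈ commutator (Heisenberg K) := by
  have x0 : Heisenberg K := ((1 : K), (0 : K), (0 : K))
  have h := comm_mem_commutator (((1 : K), (0 : K), (0 : K)) : Heisenberg K)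
    (((0 : K), γ, (0 : K)) : Heisenberg K)
  erw [comm_formula] at h
  have e : (((1 : K), (0 : K), (0 : K)) : Heisenberg K).1 *
        (((0 : K), γ, (0 : K)) : Heisenberg K).2.1 -
      (((0 : K), γ, (0 : K)) : Heisenberg K).1 *
        (((1 : K), (0 : K), (0 : K)) : Heisenberg K).2.1 = γ := by
    norm_num
  rwa [e] at h

lemma mem_commutator_of (x : Heisenberg K) (h1 : x.1 = 0) (h2 : x.2.1 = 0) :
    x ∈ commutator (Heisenberg K) := by
  have hx : x = zmk x.2.2 := Prod.ext h1 (Prod.ext h2 rfl)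
  rw [hx]
  exact z_mem_commutator _

/-- Projection of the Heisenberg group onto its first two coordinates. -/
def proj : Heisenberg K →* Multiplicative (K × K) where
  toFun x := Multiplicative.ofAdd (x.1, x.2.1)
  map_one' := rfl
  map_mul' _ _ := rfl

lemma of_eq_of (x y : Heisenberg K) (h1 : x.1 = y.1) (h2 : x.2.1 = y.2.1) :
    Abelianization.of x = Abelianization.of y := by
  have h : (QuotientGroup.mk x : Abelianization (Heisenberg K)) = QuotientGroup.mk y := by
    rw [QuotientGroup.eq]
    apply mem_commutator_of <;> simp [↓mul_def, inv_def, h1, h2]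
  exact h

/-- `Abelianization.of` with the group explicit. -/
def amk (x : Heisenberg K) : Abelianization (Heisenberg K) := Abelianization.of x

lemma amk_eq_of (x : Heisenberg K) : amk x = Abelianization.of x := rfl

/-- Underlying function of `ιe`. -/
def ιfun (v : K × K) : Additive (Abelianization (Heisenberg K)) :=
  Additive.ofMul (amk (v.1, v.2, (0 : K)))

/-- Inverse function of `ιe`. -/
def ιinv (u : Additive (Abelianization (Heisenberg K))) : K × K :=
  (Abelianization.lift proj (Additive.toMul u)).toAdd

/-- The abelianization of the Heisenberg group is `K × K`. -/
def ιe (K : Type) [Field K] : (K × K) ≃+ Additive (Abelianization (Heisenberg K)) where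
  toFun := ιfun
  invFun := ιinv
  left_inv v := by
    show ιinv (ιfun v) = v
    unfold ιinv ιfun
    show ((Abelianization.lift proj) (Abelianization.of (show Heisenberg K from (v.1, v.2, (0:K))))).toAdd = v
    rw [Abelianization.lift_apply_of]
    rfl
  right_inv u := by
    obtain ⟨x, hx⟩ := QuotientGroup.mk_surjective (Additive.toMul u)
    have hx' : Abelianization.of x = Additive.toMul u := hx
    have h2 : ιfun (x.1, x.2.1) = u := by
      unfold ιfun
      have h4 : amk (x.1, x.2.1, (0 : K)) = Abelianization.of x := of_eq_of _ _ rfl rfl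
      rw [h4, hx']
      rfl
    have h3 : ιinv u = (x.1, x.2.1) := by
      unfold ιinv
      rw [← hx', Abelianization.lift_apply_of]
      rfl
    show ιfun (ιinv u) = u
    rw [h3, h2]
  map_add' v w := by
    show ιfun (v + w) = ιfun v + ιfun w
    unfold ιfun
    erw [amk_eq_of, amk_eq_of, amk_eq_of, ← ofMul_mul, ← map_mul]
    apply congrArg Additive.ofMul
    apply of_eq_of <;> rfl

lemma ιe_apply (v : K × K) :
    ιe K v = Additive.ofMul (amk (v.1, v.2, (0 : K))) := rfl

/-- The central coordinate map into the quotient `H' / N`. -/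
def pi0 (N : Subgroup (Heisenberg K)) :
    K →+ Additive (↥(commutator (Heisenberg K)) ⧸
      N.subgroupOf (commutator (Heisenberg K))) :=
  AddMonoidHom.mk' (fun γ => Additive.ofMul (QuotientGroup.mk
      (⟨zmk γ, z_mem_commutator γ⟩ : ↥(commutator (Heisenberg K)))))
    (by
      intro γ γ'
      rw [← ofMul_mul, ← QuotientGroup.mk_mul]
      apply congrArg Additive.ofMul
      apply congrArg QuotientGroup.mk
      apply Subtype.ext
      show zmk (γ + γ') = zmk γ * zmk γ'
      rw [zmk_mul])

lemma pi0_apply (N : Subgroup (Heisenberg K)) (γ : K) :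
    pi0 N γ = Additive.ofMul (QuotientGroup.mk
      (⟨zmk γ, z_mem_commutator γ⟩ : ↥(commutator (Heisenberg K)))) := rfl

lemma pi0_eq_zero_iff (N : Subgroup (Heisenberg K)) (γ : K) :
    pi0 N γ = 0 ↔ zmk γ ∈ N := by
  rw [pi0_apply, ofMul_eq_zero, QuotientGroup.eq_one_iff, Subgroup.mem_subgroupOf]

lemma pi0_surjective (N : Subgroup (Heisenberg K)) :
    Function.Surjective (pi0 N (K := K)) := by
  intro u
  obtain ⟨s, hs⟩ := QuotientGroup.mk_surjective (Additive.toMul u)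
  obtain ⟨x, hx⟩ := s
  obtain ⟨h1, h2⟩ := commutator_le_zSubgroup hx
  refine ⟨x.2.2, ?_⟩
  have hxe : (⟨zmk x.2.2, z_mem_commutator x.2.2⟩ :
      ↥(commutator (Heisenberg K))) = ⟨x, hx⟩ := by
    apply Subtype.ext
    show zmk x.2.2 = x
    refine Prod.ext ?_ (Prod.ext ?_ ?_)
    · exact h1.symm
    · exact h2.symm
    · rfl
  rw [pi0_apply, hxe, hs]
  rfl

/-- The action of a `2 × 2` matrix on `K × K`, as an additive endomorphism. -/
def toEnd (A : Matrix (Fin 2) (Fin 2) K) : AddMonoid.End (K × K) :=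
  AddMonoidHom.mk' (fun v => (A 0 0 * v.1 + A 0 1 * v.2, A 1 0 * v.1 + A 1 1 * v.2))
    (by
      intro v w
      refine Prod.ext ?_ ?_ <;> dsimp <;> ring)

lemma toEnd_apply (A : Matrix (Fin 2) (Fin 2) K) (v : K × K) :
    toEnd A v = (A 0 0 * v.1 + A 0 1 * v.2, A 1 0 * v.1 + A 1 1 * v.2) := rfl

lemma toEnd_one : toEnd (1 : Matrix (Fin 2) (Fin 2) K) = 1 := by
  refine DFunLike.ext _ _ (fun v => ?_)
  rw [toEnd_apply]
  have e0 : (1 : Matrix (Fin 2) (Fin 2) K) 0 0 = 1 := Matrix.one_apply_eq 0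
  have e1 : (1 : Matrix (Fin 2) (Fin 2) K) 0 1 = 0 := Matrix.one_apply_ne (by decide)
  have e2 : (1 : Matrix (Fin 2) (Fin 2) K) 1 0 = 0 := Matrix.one_apply_ne (by decide)
  have e3 : (1 : Matrix (Fin 2) (Fin 2) K) 1 1 = 1 := Matrix.one_apply_eq 1
  rw [e0, e1, e2, e3]
  show _ = v
  refine Prod.ext ?_ ?_ <;> dsimp <;> ring

lemma toEnd_zero : toEnd (0 : Matrix (Fin 2) (Fin 2) K) = 0 := by
  refine DFunLike.ext _ _ (fun v => ?_)
  rw [toEnd_apply]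
  show _ = ((0 : K), (0 : K))
  refine Prod.ext ?_ ?_ <;> dsimp <;> ring

lemma toEnd_mul (A B : Matrix (Fin 2) (Fin 2) K) :
    toEnd (A * B) = toEnd A * toEnd B := by
  refine DFunLike.ext _ _ (fun v => ?_)
  show toEnd (A * B) v = toEnd A (toEnd B v)
  rw [toEnd_apply, toEnd_apply, toEnd_apply]
  refine Prod.ext ?_ ?_ <;>
    · dsimp
      simp only [Matrix.mul_apply, Fin.sum_univ_two]
      ring

lemma toEnd_add (A B : Matrix (Fin 2) (Fin 2) K) :
    toEnd (A + B) = toEnd A + toEnd B := by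
  refine DFunLike.ext _ _ (fun v => ?_)
  show toEnd (A + B) v = toEnd A v + toEnd B v
  rw [toEnd_apply, toEnd_apply, toEnd_apply]
  refine Prod.ext ?_ ?_ <;>
    · simp only [Matrix.add_apply, Prod.fst_add, Prod.snd_add]
      ring

lemma toEnd_injective :
    Function.Injective (toEnd (K := K)) := by
  intro A B h
  have h1 := congrArg (fun F : AddMonoid.End (K × K) => (F ((1 : K), (0 : K))).1) h
  have h2 := congrArg (fun F : AddMonoid.End (K × K) => (F ((1 : K), (0 : K))).2) h
  have h3 := congrArg (fun F : AddMonoid.End (K × K) => (F ((0 : K), (1 : K))).1) h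
  have h4 := congrArg (fun F : AddMonoid.End (K × K) => (F ((0 : K), (1 : K))).2) h
  simp only [toEnd_apply, mul_one, mul_zero, add_zero, zero_add] at h1 h2 h3 h4
  ext i j
  fin_cases i <;> fin_cases j <;> assumption

lemma adjugate_add2 (A B : Matrix (Fin 2) (Fin 2) K) :
    (A + B).adjugate = A.adjugate + B.adjugate := by
  rw [Matrix.adjugate_fin_two, Matrix.adjugate_fin_two, Matrix.adjugate_fin_two]
  ext i j
  fin_cases i <;> fin_cases j <;>
    (simp [Matrix.add_apply]; try ring)

/-- Conjugation of endomorphisms by the isomorphism `ιe`. -/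
def conjE (K : Type) [Field K] :
    AddMonoid.End (K × K) →+* AddMonoid.End (Additive (Abelianization (Heisenberg K))) where
  toFun F := ((ιe K).toAddMonoidHom.comp (F.comp (ιe K).symm.toAddMonoidHom) : AddMonoid.End _)
  map_one' := by
    refine DFunLike.ext _ _ (fun u => ?_)
    exact (ιe K).apply_symm_apply u
  map_mul' F G := by
    refine DFunLike.ext _ _ (fun u => ?_)
    show ιe K (F (G ((ιe K).symm u)))
      = ιe K (F ((ιe K).symm (ιe K (G ((ιe K).symm u)))))
    rw [AddEquiv.symm_apply_apply]
  map_zero' := by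
    refine DFunLike.ext _ _ (fun u => ?_)
    show ιe K ((0 : AddMonoid.End (K × K)) ((ιe K).symm u)) = 0
    exact map_zero _
  map_add' F G := by
    refine DFunLike.ext _ _ (fun u => ?_)
    exact map_add (ιe K) _ _

lemma conjE_apply (F : AddMonoid.End (K × K))
    (u : Additive (Abelianization (Heisenberg K))) :
    conjE K F u = ιe K (F ((ιe K).symm u)) := rfl

lemma conjE_injective : Function.Injective (conjE K) := by
  intro F G h
  refine DFunLike.ext _ _ (fun v => ?_)
  have h1 := DFunLike.congr_fun h (ιe K v)
  rw [conjE_apply, conjE_apply, AddEquiv.symm_apply_apply] at h1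
  exact (ιe K).injective h1

end Heisenberg

open Heisenberg in
/-- Let `N ≤ H'` be a subgroup of the commutator subgroup of the
Heisenberg group `H = H(F_q)`, `q = p^e`, with `|H' : N| = p^g`, `g ≥ 2`.  The
commutator of `H/N` induces a biadditive (`Z_p`-bilinear) map
`c : H/H' × H/H' → H'/N`, and its adjoint ring is isomorphic to `M₂(F_q)`. -/
theorem heisenberg_adjoint_ring_iso_matrix
    (p e : ℕ) (hp : p.Prime) (he : e.Prime) (hp2 : 2 < p) (he2 : 2 < e)
    (K : Type) [Field K] [Fintype K] (hK : Fintype.card K = p ^ e)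
    (N : Subgroup (Heisenberg K)) (hN : N ≤ commutator (Heisenberg K))
    (g : ℕ) (hg : 2 ≤ g)
    (hrel : N.relIndex (commutator (Heisenberg K)) = p ^ g)
    (c : Additive (Abelianization (Heisenberg K)) →+
      Additive (Abelianization (Heisenberg K)) →+
      Additive (↥(commutator (Heisenberg K)) ⧸
        N.subgroupOf (commutator (Heisenberg K))))
    (hc : ∀ x y : Heisenberg K,
      c (Additive.ofMul (Abelianization.of x)) (Additive.ofMul (Abelianization.of y)) =
        Additive.ofMul (QuotientGroup.mk
          (⟨x⁻¹ * y⁻¹ * x * y, comm_mem_commutator x y⟩ :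
            ↥(commutator (Heisenberg K))))) :
    Nonempty (↥(AdjRing c) ≃+* Matrix (Fin 2) (Fin 2) K) := by
  classical
  -- the additive subgroup of K corresponding to N
  let N₀ : AddSubgroup K :=
    { carrier := {γ : K | zmk γ ∈ N}
      zero_mem' := by
        show zmk (0 : K) ∈ N
        have h : zmk (0 : K) = (1 : Heisenberg K) := rfl
        rw [h]; exact N.one_mem
      add_mem' := by
        intro a b ha hb
        have h := N.mul_mem ha hb
        rwa [zmk_mul] at h
      neg_mem' := by
        intro a ha
        have h := N.inv_mem ha
        rwa [zmk_inv] at h }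
  have hmemN₀ : ∀ γ : K, γ ∈ N₀ ↔ zmk γ ∈ N := fun _ => Iff.rfl
  -- cardinality of N₀
  have hcard0 : Nat.card ↥N₀ * p ^ g = p ^ e := by
    have hkereq : (pi0 N).ker = N₀ := by
      ext γ
      rw [AddMonoidHom.mem_ker, pi0_eq_zero_iff]
      exact (hmemN₀ γ).symm
    have equ := QuotientAddGroup.quotientKerEquivOfSurjective (pi0 N) (pi0_surjective N)
    have h1 : Nat.card (K ⧸ N₀) = p ^ g := by
      rw [← hkereq]
      have e2 := Nat.card_congr equ.toEquiv
      rw [e2]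
      have e3 : Nat.card (Additive (↥(commutator (Heisenberg K)) ⧸
            N.subgroupOf (commutator (Heisenberg K))))
          = Nat.card (↥(commutator (Heisenberg K)) ⧸
            N.subgroupOf (commutator (Heisenberg K))) :=
        Nat.card_congr Additive.toMul
      rw [e3, ← Subgroup.index_eq_card]
      exact hrel
    have h2 := AddSubgroup.card_mul_index N₀
    rw [AddSubgroup.index_eq_card, h1] at h2
    rw [h2, Nat.card_eq_fintype_card, hK]
  -- the commutator pairing through ιe
  have c_eq : ∀ x y : K × K,
      c (ιe K x) (ιe K y) = pi0 N (x.1 * y.2 - y.1 * x.2) := by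
    intro x y
    have h := hc ((x.1, x.2, (0 : K)) : Heisenberg K) ((y.1, y.2, (0 : K)) : Heisenberg K)
    rw [ιe_apply, ιe_apply]
    erw [amk_eq_of, amk_eq_of, h, pi0_apply]
    refine congrArg Additive.ofMul (congrArg QuotientGroup.mk (Subtype.ext ?_))
    exact comm_formula ((x.1, x.2, (0 : K)) : Heisenberg K) ((y.1, y.2, (0 : K)) : Heisenberg K)
  -- the candidate map
  let T : Matrix (Fin 2) (Fin 2) K →
      (AddMonoid.End (Additive (Abelianization (Heisenberg K))) ×
        (AddMonoid.End (Additive (Abelianization (Heisenberg K))))ᵐᵒᵖ) :=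
    fun A => (conjE K (toEnd A), MulOpposite.op (conjE K (toEnd A.adjugate)))
  have omega_adj : ∀ (A : Matrix (Fin 2) (Fin 2) K) (x y : K × K),
      (toEnd A x).1 * y.2 - y.1 * (toEnd A x).2
        = x.1 * (toEnd A.adjugate y).2 - (toEnd A.adjugate y).1 * x.2 := by
    intro A x y
    rw [toEnd_apply, toEnd_apply, Matrix.adjugate_fin_two]
    simp only [Matrix.of_apply, Matrix.cons_val', Matrix.cons_val_zero, Matrix.cons_val_one,
      Matrix.head_cons, Matrix.empty_val', Matrix.cons_val_fin_one, Matrix.head_fin_const]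
    ring
  have hTmem : ∀ A, T A ∈ AdjRing c := by
    intro A u v
    obtain ⟨x, rfl⟩ := (ιe K).surjective u
    obtain ⟨y, rfl⟩ := (ιe K).surjective v
    show c (conjE K (toEnd A) (ιe K x)) (ιe K y)
      = c (ιe K x) (conjE K (toEnd A.adjugate) (ιe K y))
    rw [conjE_apply, conjE_apply, AddEquiv.symm_apply_apply, AddEquiv.symm_apply_apply,
      c_eq, c_eq]
    exact congrArg (pi0 N) (omega_adj A x y)
  have hTinj : Function.Injective T := by
    intro A B hAB
    have h1 : conjE K (toEnd A) = conjE K (toEnd B) := congrArg Prod.fst hAB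
    exact toEnd_injective (conjE_injective h1)
  -- the ring homomorphism from the matrix ring
  let Ψ : Matrix (Fin 2) (Fin 2) K →+* ↥(AdjRing c) :=
    { toFun := fun A => ⟨T A, hTmem A⟩
      map_one' := by
        apply Subtype.ext
        refine Prod.ext ?_ ?_
        · show conjE K (toEnd 1) = 1
          rw [toEnd_one, map_one]
        · show MulOpposite.op (conjE K (toEnd (Matrix.adjugate 1))) = 1
          rw [Matrix.adjugate_one, toEnd_one, map_one]
          rfl
      map_mul' := fun A B => by
        apply Subtype.ext
        refine Prod.ext ?_ ?_
        · show conjE K (toEnd (A * B)) = conjE K (toEnd A) * conjE K (toEnd B)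
          rw [toEnd_mul, map_mul]
        · show MulOpposite.op (conjE K (toEnd (A * B).adjugate))
            = MulOpposite.op (conjE K (toEnd A.adjugate))
              * MulOpposite.op (conjE K (toEnd B.adjugate))
          rw [Matrix.adjugate_mul_distrib, toEnd_mul, map_mul]
          rfl
      map_zero' := by
        apply Subtype.ext
        refine Prod.ext ?_ ?_
        · show conjE K (toEnd 0) = 0
          rw [toEnd_zero, map_zero]
        · show MulOpposite.op (conjE K (toEnd (Matrix.adjugate 0))) = 0
          rw [Matrix.adjugate_zero, toEnd_zero, map_zero]
          rfl
      map_add' := fun A B => by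
        apply Subtype.ext
        refine Prod.ext ?_ ?_
        · show conjE K (toEnd (A + B)) = conjE K (toEnd A) + conjE K (toEnd B)
          rw [toEnd_add, map_add]
        · show MulOpposite.op (conjE K (toEnd (A + B).adjugate))
            = MulOpposite.op (conjE K (toEnd A.adjugate))
              + MulOpposite.op (conjE K (toEnd B.adjugate))
          rw [adjugate_add2, toEnd_add, map_add]
          rfl }
  have hΨinj : Function.Injective Ψ := by
    intro A B hAB
    exact hTinj (congrArg Subtype.val hAB)
  have hΨsurj : Function.Surjective Ψ := by
    rintro ⟨⟨F, G⟩, hmem⟩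
    have hmem' : ∀ u v, c (F u) v = c u (G.unop v) := hmem
    let F' : (K × K) →+ (K × K) :=
      (ιe K).symm.toAddMonoidHom.comp (AddMonoidHom.comp F (ιe K).toAddMonoidHom)
    let G' : (K × K) →+ (K × K) :=
      (ιe K).symm.toAddMonoidHom.comp (AddMonoidHom.comp G.unop (ιe K).toAddMonoidHom)
    have hFι : ∀ x : K × K, F (ιe K x) = ιe K (F' x) := by
      intro x
      show _ = ιe K ((ιe K).symm (F (ιe K x)))
      rw [AddEquiv.apply_symm_apply]
    have hGι : ∀ y : K × K, G.unop (ιe K y) = ιe K (G' y) := by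
      intro y
      show _ = ιe K ((ιe K).symm (G.unop (ιe K y)))
      rw [AddEquiv.apply_symm_apply]
    have hdiff : ∀ x y : K × K,
        (F' x).1 * y.2 - y.1 * (F' x).2 - (x.1 * (G' y).2 - (G' y).1 * x.2) ∈ N₀ := by
      intro x y
      have h0 := hmem' (ιe K x) (ιe K y)
      rw [hFι, hGι, c_eq, c_eq] at h0
      have h1 : pi0 N ((F' x).1 * y.2 - y.1 * (F' x).2
          - (x.1 * (G' y).2 - (G' y).1 * x.2)) = 0 := by
        rw [map_sub, h0, sub_self]
      exact (pi0_eq_zero_iff N _).mp h1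
    have hdiff' : ∀ x y : K × K,
        x.1 * (G' y).2 - (G' y).1 * x.2 - ((F' x).1 * y.2 - y.1 * (F' x).2) ∈ N₀ := by
      intro x y
      have h0 := N₀.neg_mem (hdiff x y)
      rwa [neg_sub] at h0
    -- component maps
    let f11 : K →+ K := (AddMonoidHom.fst K K).comp (F'.comp (AddMonoidHom.inl K K))
    let f21 : K →+ K := (AddMonoidHom.snd K K).comp (F'.comp (AddMonoidHom.inl K K))
    let f12 : K →+ K := (AddMonoidHom.fst K K).comp (F'.comp (AddMonoidHom.inr K K))
    let f22 : K →+ K := (AddMonoidHom.snd K K).comp (F'.comp (AddMonoidHom.inr K K))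
    let g11 : K →+ K := (AddMonoidHom.fst K K).comp (G'.comp (AddMonoidHom.inl K K))
    let g21 : K →+ K := (AddMonoidHom.snd K K).comp (G'.comp (AddMonoidHom.inl K K))
    let g12 : K →+ K := (AddMonoidHom.fst K K).comp (G'.comp (AddMonoidHom.inr K K))
    let g22 : K →+ K := (AddMonoidHom.snd K K).comp (G'.comp (AddMonoidHom.inr K K))
    have hf11 : ∀ a : K, f11 a = (F' (a, (0:K))).1 := fun _ => rfl
    have hf21 : ∀ a : K, f21 a = (F' (a, (0:K))).2 := fun _ => rfl
    have hf12 : ∀ a : K, f12 a = (F' ((0:K), a)).1 := fun _ => rfl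
    have hf22 : ∀ a : K, f22 a = (F' ((0:K), a)).2 := fun _ => rfl
    have hg11 : ∀ a : K, g11 a = (G' (a, (0:K))).1 := fun _ => rfl
    have hg21 : ∀ a : K, g21 a = (G' (a, (0:K))).2 := fun _ => rfl
    have hg12 : ∀ a : K, g12 a = (G' ((0:K), a)).1 := fun _ => rfl
    have hg22 : ∀ a : K, g22 a = (G' ((0:K), a)).2 := fun _ => rfl
    obtain ⟨μ₁, hμ₁f, hμ₁g⟩ := keylemma p e hp he K hK N₀ g hg hcard0 f11 g22 (by
      intro a d
      have h0 := hdiff (a, (0:K)) ((0:K), d)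
      have e0 : f11 a * d - a * g22 d
          = (F' (a, (0:K))).1 * ((0:K), d).2 - ((0:K), d).1 * (F' (a, (0:K))).2
            - ((a, (0:K)).1 * (G' ((0:K), d)).2 - (G' ((0:K), d)).1 * (a, (0:K)).2) := by
        rw [hf11, hg22]
        show _ = (F' (a, (0:K))).1 * d - (0:K) * (F' (a, (0:K))).2
          - (a * (G' ((0:K), d)).2 - (G' ((0:K), d)).1 * (0:K))
        ring
      rw [e0]
      exact h0)
    obtain ⟨μ₂, hμ₂f, hμ₂g⟩ := keylemma p e hp he K hK N₀ g hg hcard0 f12 (-g12) (by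
      intro b d
      have h0 := hdiff ((0:K), b) ((0:K), d)
      have e0 : f12 b * d - b * (-g12) d
          = (F' ((0:K), b)).1 * ((0:K), d).2 - ((0:K), d).1 * (F' ((0:K), b)).2
            - (((0:K), b).1 * (G' ((0:K), d)).2 - (G' ((0:K), d)).1 * ((0:K), b).2) := by
        rw [AddMonoidHom.neg_apply, hf12, hg12]
        show _ = (F' ((0:K), b)).1 * d - (0:K) * (F' ((0:K), b)).2
          - ((0:K) * (G' ((0:K), d)).2 - (G' ((0:K), d)).1 * b)
        ring
      rw [e0]
      exact h0)
    obtain ⟨μ₃, hμ₃f, hμ₃g⟩ := keylemma p e hp he K hK N₀ g hg hcard0 f21 (-g21) (by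
      intro a cc
      have h0 := hdiff' (a, (0:K)) (cc, (0:K))
      have e0 : f21 a * cc - a * (-g21) cc
          = (a, (0:K)).1 * (G' (cc, (0:K))).2 - (G' (cc, (0:K))).1 * (a, (0:K)).2
            - ((F' (a, (0:K))).1 * (cc, (0:K)).2 - (cc, (0:K)).1 * (F' (a, (0:K))).2) := by
        rw [AddMonoidHom.neg_apply, hf21, hg21]
        show _ = a * (G' (cc, (0:K))).2 - (G' (cc, (0:K))).1 * (0:K)
          - ((F' (a, (0:K))).1 * (0:K) - cc * (F' (a, (0:K))).2)
        ring
      rw [e0]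
      exact h0)
    obtain ⟨μ₄, hμ₄f, hμ₄g⟩ := keylemma p e hp he K hK N₀ g hg hcard0 f22 g11 (by
      intro b cc
      have h0 := hdiff' ((0:K), b) (cc, (0:K))
      have e0 : f22 b * cc - b * g11 cc
          = ((0:K), b).1 * (G' (cc, (0:K))).2 - (G' (cc, (0:K))).1 * ((0:K), b).2
            - ((F' ((0:K), b)).1 * (cc, (0:K)).2 - (cc, (0:K)).1 * (F' ((0:K), b)).2) := by
        rw [hf22, hg11]
        show _ = (0:K) * (G' (cc, (0:K))).2 - (G' (cc, (0:K))).1 * b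
          - ((F' ((0:K), b)).1 * (0:K) - cc * (F' ((0:K), b)).2)
        ring
      rw [e0]
      exact h0)
    -- the matrix
    set A : Matrix (Fin 2) (Fin 2) K := !![μ₁, μ₂; μ₃, μ₄] with hA
    have hA00 : A 0 0 = μ₁ := by simp [hA]
    have hA01 : A 0 1 = μ₂ := by simp [hA]
    have hA10 : A 1 0 = μ₃ := by simp [hA]
    have hA11 : A 1 1 = μ₄ := by simp [hA]
    have hAdj : A.adjugate = !![μ₄, -μ₂; -μ₃, μ₁] := by
      rw [Matrix.adjugate_fin_two, hA00, hA01, hA10, hA11]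
    have hAdj00 : A.adjugate 0 0 = μ₄ := by rw [hAdj]; simp
    have hAdj01 : A.adjugate 0 1 = -μ₂ := by rw [hAdj]; simp
    have hAdj10 : A.adjugate 1 0 = -μ₃ := by rw [hAdj]; simp
    have hAdj11 : A.adjugate 1 1 = μ₁ := by rw [hAdj]; simp
    have hg12' : ∀ x : K, g12 x = -(μ₂ * x) := by
      intro x
      have h0 := hμ₂g x
      rw [AddMonoidHom.neg_apply] at h0
      rw [← h0, neg_neg]
    have hg21' : ∀ x : K, g21 x = -(μ₃ * x) := by
      intro x
      have h0 := hμ₃g x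
      rw [AddMonoidHom.neg_apply] at h0
      rw [← h0, neg_neg]
    have hsplit : ∀ (H : (K × K) →+ (K × K)) (v : K × K),
        H v = H (v.1, (0:K)) + H ((0:K), v.2) := by
      intro H v
      have hv : v = ((v.1, (0:K)) : K × K) + ((0:K), v.2) := by
        refine Prod.ext ?_ ?_ <;> dsimp <;> ring
      conv_lhs => rw [hv]
      rw [map_add]
    have hF'apply : ∀ v : K × K, F' v = toEnd A v := by
      intro v
      rw [hsplit F' v, toEnd_apply]
      refine Prod.ext ?_ ?_
      · show (F' (v.1, (0:K))).1 + (F' ((0:K), v.2)).1 = A 0 0 * v.1 + A 0 1 * v.2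
        rw [← hf11, ← hf12, hμ₁f, hμ₂f, hA00, hA01]
      · show (F' (v.1, (0:K))).2 + (F' ((0:K), v.2)).2 = A 1 0 * v.1 + A 1 1 * v.2
        rw [← hf21, ← hf22, hμ₃f, hμ₄f, hA10, hA11]
    have hG'apply : ∀ v : K × K, G' v = toEnd A.adjugate v := by
      intro v
      rw [hsplit G' v, toEnd_apply]
      refine Prod.ext ?_ ?_
      · show (G' (v.1, (0:K))).1 + (G' ((0:K), v.2)).1
          = A.adjugate 0 0 * v.1 + A.adjugate 0 1 * v.2
        rw [← hg11, ← hg12, hμ₄g, hg12', hAdj00, hAdj01]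
        ring
      · show (G' (v.1, (0:K))).2 + (G' ((0:K), v.2)).2
          = A.adjugate 1 0 * v.1 + A.adjugate 1 1 * v.2
        rw [← hg21, ← hg22, hg21', hμ₁g, hAdj10, hAdj11]
        ring
    refine ⟨A, ?_⟩
    apply Subtype.ext
    refine Prod.ext ?_ ?_
    · show conjE K (toEnd A) = F
      refine DFunLike.ext _ _ (fun u => ?_)
      obtain ⟨x, rfl⟩ := (ιe K).surjective u
      rw [conjE_apply, AddEquiv.symm_apply_apply, ← hF'apply, hFι]
    · show MulOpposite.op (conjE K (toEnd A.adjugate)) = G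
      rw [← MulOpposite.op_unop G]
      apply congrArg MulOpposite.op
      refine DFunLike.ext _ _ (fun u => ?_)
      obtain ⟨y, rfl⟩ := (ιe K).surjective u
      rw [conjE_apply, AddEquiv.symm_apply_apply, ← hG'apply, hGι]
  exact ⟨(RingEquiv.ofBijective Ψ ⟨hΨinj, hΨsurj⟩).symm⟩
end
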